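/- Suppose Φ: D → ℂ is a function on the period domain D (weight 3, all Hodge numbers 1) such that (i) Φ is constant on exp(zN′)·K·F₀ for every z with |z| < 1, and (ii) lim_{x→∞} Φ(exp(ixN)F₀) = 0. Then Φ(F_∞) = 0. In particular, if additionally Φ(F) ≠ 0 for all F ∈ D, no such Φ exists. -/

import Mathlib

open Matrix Complex NormedSpace Filter

noncomputable section

/-- Symplectic form with Gram matrix `((0, iI), (-iI, 0))` in the basis `u₁,…,u₄`
(the standard basis of `ℂ⁴`). -/
def Bu (x y : Fin 4 → ℂ) : ℂ :=
  Complex.I * (x 0 * y 2) + Complex.I * (x 1 * y 3)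
    - Complex.I * (x 2 * y 0) - Complex.I * (x 3 * y 1)

/-- Conjugation with `conj u₁ = u₃`, `conj u₂ = u₄`, `conj u₃ = u₁`, `conj u₄ = u₂`. -/
def cjU (x : Fin 4 → ℂ) : Fin 4 → ℂ := fun i => starRingEnd ℂ (x (i + 2))

/-- The period domain `D` of weight-3 polarized Hodge structures with all `h^{p,q} = 1`
(see Statement 7 for the sign conventions coming from the Weil operator). -/
def Dflag : Set (Submodule ℂ (Fin 4 → ℂ) × Submodule ℂ (Fin 4 → ℂ)) :=
  {F | F.1 ≤ F.2 ∧ Module.finrank ℂ F.1 = 1 ∧ Module.finrank ℂ F.2 = 2 ∧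
    (∀ x ∈ F.2, ∀ y ∈ F.2, Bu x y = 0) ∧
    (∀ v ∈ F.1, v ≠ 0 → 0 < (-Complex.I * Bu v (cjU v)).re) ∧
    (∀ v ∈ F.2, (∀ w ∈ F.1, Bu v (cjU w) = 0) → v ≠ 0 →
      0 < (Complex.I * Bu v (cjU v)).re)}

/-- `G = Sp(4, ℝ)` inside `GL₄(ℂ)` via the basis `u₁,…,u₄`. -/
def Gsp : Set (Matrix (Fin 4) (Fin 4) ℂ) :=
  {g | (∀ x y, Bu (g.mulVec x) (g.mulVec y) = Bu x y) ∧
       (∀ x, g.mulVec (cjU x) = cjU (g.mulVec x))}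

/-- The Weil operator of `F₀`: `diag(-i, -i, i, i)` in the basis `u₁,…,u₄`. -/
def CF0 : Matrix (Fin 4) (Fin 4) ℂ :=
  Matrix.diagonal ![-Complex.I, -Complex.I, Complex.I, Complex.I]

/-- The maximal compact subgroup `K` at `F₀`. -/
def Ksub : Set (Matrix (Fin 4) (Fin 4) ℂ) :=
  {g ∈ Gsp | ∀ v w, Bu (CF0.mulVec (g.mulVec v)) (cjU (g.mulVec w)) =
    Bu (CF0.mulVec v) (cjU w)}

/-- The base flag `F₀`: `F₀³ = span(u₂)`, `F₀² = span(u₂, u₃)`. -/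
def F0 : Submodule ℂ (Fin 4 → ℂ) × Submodule ℂ (Fin 4 → ℂ) :=
  (Submodule.span ℂ {![0, 1, 0, 0]}, Submodule.span ℂ {![0, 1, 0, 0], ![0, 0, 1, 0]})

/-- The flag `F_∞`: `F_∞³ = span(u₁)`, `F_∞² = span(u₁, u₄)`. -/
def Finfty : Submodule ℂ (Fin 4 → ℂ) × Submodule ℂ (Fin 4 → ℂ) :=
  (Submodule.span ℂ {![1, 0, 0, 0]}, Submodule.span ℂ {![1, 0, 0, 0], ![0, 0, 0, 1]})

/-- `g` acts on a flag by applying the linear map to each subspace. -/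
def mapFlag (g : Matrix (Fin 4) (Fin 4) ℂ)
    (F : Submodule ℂ (Fin 4 → ℂ) × Submodule ℂ (Fin 4 → ℂ)) :
    Submodule ℂ (Fin 4 → ℂ) × Submodule ℂ (Fin 4 → ℂ) :=
  (F.1.map g.mulVecLin, F.2.map g.mulVecLin)

open Matrix Complex NormedSpace Filter

/-! ### Auxiliary matrices -/

def Swp : Matrix (Fin 4) (Fin 4) ℂ := Matrix.of ![![0,1,0,0],![1,0,0,0],![0,0,0,1],![0,0,1,0]]
def N'mat : Matrix (Fin 4) (Fin 4) ℂ := Matrix.of ![![0,0,1,0],![0,0,0,0],![0,0,0,0],![0,0,0,0]]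
def Nmat : Matrix (Fin 4) (Fin 4) ℂ :=
  Matrix.of ![![Complex.I/2,0,-Complex.I/2,0],![0,0,0,0],![Complex.I/2,0,-Complex.I/2,0],![0,0,0,0]]

lemma cjU_eq (x : Fin 4 → ℂ) : cjU x =
    ![starRingEnd ℂ (x 2), starRingEnd ℂ (x 3), starRingEnd ℂ (x 0), starRingEnd ℂ (x 1)] := by
  funext i; fin_cases i <;> simp [cjU]

lemma Swp_mulVec (x : Fin 4 → ℂ) : Swp.mulVec x = ![x 1, x 0, x 3, x 2] := by
  funext i
  fin_cases i <;> simp [Swp, Matrix.mulVec, dotProduct, Fin.sum_univ_four, Matrix.cons_val',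
    Matrix.vecHead, Matrix.vecTail]

lemma N'mat_mulVec (x : Fin 4 → ℂ) : N'mat.mulVec x = ![x 2, 0, 0, 0] := by
  funext i
  fin_cases i <;> simp [N'mat, Matrix.mulVec, dotProduct, Fin.sum_univ_four, Matrix.cons_val',
    Matrix.vecHead, Matrix.vecTail]

lemma Nmat_mulVec (x : Fin 4 → ℂ) :
    Nmat.mulVec x = ![Complex.I/2 * (x 0 - x 2), 0, Complex.I/2 * (x 0 - x 2), 0] := by
  funext i
  fin_cases i <;> simp [Nmat, Matrix.mulVec, dotProduct, Fin.sum_univ_four, Matrix.cons_val',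
    Matrix.vecHead, Matrix.vecTail] <;> ring

lemma CF0_mulVec (x : Fin 4 → ℂ) :
    CF0.mulVec x = ![-Complex.I * x 0, -Complex.I * x 1, Complex.I * x 2, Complex.I * x 3] := by
  funext i
  fin_cases i <;> simp [CF0, Matrix.mulVec, dotProduct, Fin.sum_univ_four, Matrix.diagonal,
    Matrix.cons_val', Matrix.vecHead, Matrix.vecTail]

/-! ### Group membership -/

lemma Swp_mem_Ksub : Swp ∈ Ksub := by
  refine ⟨⟨fun x y => ?_, fun x => ?_⟩, fun v w => ?_⟩
  · simp [Bu, Swp_mulVec]; ring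
  · rw [Swp_mulVec, cjU_eq, cjU_eq, Swp_mulVec]
    funext i; fin_cases i <;> simp
  · simp [Bu, Swp_mulVec, CF0_mulVec, cjU_eq]; ring

lemma one_mem_Ksub : (1 : Matrix (Fin 4) (Fin 4) ℂ) ∈ Ksub := by
  refine ⟨⟨fun x y => ?_, fun x => ?_⟩, fun v w => ?_⟩ <;> simp [Matrix.one_mulVec]

/-! ### Identification of `N` and `N'` -/

lemma hp0 : (Pi.single 0 1 : Fin 4 → ℂ) = ![1,0,0,0] := by
  funext i; fin_cases i <;> simp [Pi.single_apply]
lemma hp1 : (Pi.single 1 1 : Fin 4 → ℂ) = ![0,1,0,0] := by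
  funext i; fin_cases i <;> simp [Pi.single_apply]
lemma hp2 : (Pi.single 2 1 : Fin 4 → ℂ) = ![0,0,1,0] := by
  funext i; fin_cases i <;> simp [Pi.single_apply]
lemma hp3 : (Pi.single 3 1 : Fin 4 → ℂ) = ![0,0,0,1] := by
  funext i; fin_cases i <;> simp [Pi.single_apply]

lemma matrix_ext_of_mulVec {M M' : Matrix (Fin 4) (Fin 4) ℂ}
    (h : ∀ j, M.mulVec (Pi.single j 1) = M'.mulVec (Pi.single j 1)) : M = M' := by
  ext i j
  have h1 : M i j = M.mulVec (Pi.single j 1) i := by simp [mulVec_single]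
  have h2 : M' i j = M'.mulVec (Pi.single j 1) i := by simp [mulVec_single]
  rw [h1, h2, h j]

lemma N'_eq (N' : Matrix (Fin 4) (Fin 4) ℂ)
    (hN'3 : N'.mulVec (Pi.single 2 1) = Pi.single 0 1)
    (hN'j : ∀ j : Fin 4, j ≠ 2 → N'.mulVec (Pi.single j 1) = 0) : N' = N'mat := by
  apply matrix_ext_of_mulVec
  intro j
  match j with
  | 0 => rw [hN'j 0 (by decide), hp0, N'mat_mulVec]
         funext i; fin_cases i <;> simp
  | 1 => rw [hN'j 1 (by decide), hp1, N'mat_mulVec]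
         funext i; fin_cases i <;> simp
  | 2 => rw [hN'3, hp2, hp0, N'mat_mulVec]
         funext i; fin_cases i <;> simp
  | 3 => rw [hN'j 3 (by decide), hp3, N'mat_mulVec]
         funext i; fin_cases i <;> simp

section Nid
variable (e : Fin 4 → (Fin 4 → ℂ))
    (he0 : e 0 = (Real.sqrt 2 : ℂ)⁻¹ • ![1, 0, 1, 0])
    (he1 : e 1 = (Real.sqrt 2 : ℂ)⁻¹ • ![0, 1, 0, 1])
    (he2 : e 2 = (Real.sqrt 2 : ℂ)⁻¹ • ![-Complex.I, 0, Complex.I, 0])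
    (he3 : e 3 = (Real.sqrt 2 : ℂ)⁻¹ • ![0, -Complex.I, 0, Complex.I])
    (N : Matrix (Fin 4) (Fin 4) ℂ)
    (hN3 : N.mulVec (e 2) = e 0)
    (hNj : ∀ j : Fin 4, j ≠ 2 → N.mulVec (e j) = 0)

include he0 he1 he2 he3 hN3 hNj in
lemma N_eq : N = Nmat := by
  have hs : ((Real.sqrt 2 : ℝ) : ℂ) ≠ 0 := by norm_cast; positivity
  have hs2 : ((Real.sqrt 2 : ℝ) : ℂ) * ((Real.sqrt 2 : ℝ) : ℂ) = 2 := by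
    norm_cast
    rw [Real.mul_self_sqrt] <;> norm_num
  set s : ℂ := ((Real.sqrt 2 : ℝ) : ℂ) with hsdef
  have hdec0 : (![1,0,0,0] : Fin 4 → ℂ) = s⁻¹ • e 0 + (s⁻¹ * Complex.I) • e 2 := by
    rw [he0, he2]; funext i; fin_cases i <;> simp <;> field_simp <;>
      first
        | rfl | ring1
        | linear_combination hs2 | linear_combination -hs2
        | linear_combination hs2 | linear_combination -hs2
             | linear_combination Complex.I * hs2 | linear_combination -Complex.I * hs2
        | linear_combination (Complex.I/2) * hs2 | linear_combination (-Complex.I/2) * hs2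
        | linear_combination (1 + Complex.I) * hs2 | linear_combination (1 - Complex.I) * hs2
        | linear_combination (-1 + Complex.I) * hs2 | linear_combination (-1 - Complex.I) * hs2
        | linear_combination (Complex.I/2 - 1) * hs2 | linear_combination (1 - Complex.I/2) * hs2
             | linear_combination (Complex.I/2 - 2) * hs2 | linear_combination (2 - Complex.I/2) * hs2
        | linear_combination (Complex.I/2 + 1) * hs2 | linear_combination (-Complex.I/2 - 1) * hs2
        | linear_combination hs2 + Complex.I_sq | linear_combination -Complex.I_sq
  have hdec1 : (![0,1,0,0] : Fin 4 → ℂ) = s⁻¹ • e 1 + (s⁻¹ * Complex.I) • e 3 := by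
    rw [he1, he3]; funext i; fin_cases i <;> simp <;> field_simp <;>
      first
        | rfl | ring1
        | linear_combination hs2 | linear_combination -hs2
        | linear_combination hs2 | linear_combination -hs2
             | linear_combination Complex.I * hs2 | linear_combination -Complex.I * hs2
        | linear_combination (Complex.I/2) * hs2 | linear_combination (-Complex.I/2) * hs2
        | linear_combination (1 + Complex.I) * hs2 | linear_combination (1 - Complex.I) * hs2
        | linear_combination (-1 + Complex.I) * hs2 | linear_combination (-1 - Complex.I) * hs2
        | linear_combination (Complex.I/2 - 1) * hs2 | linear_combination (1 - Complex.I/2) * hs2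
             | linear_combination (Complex.I/2 - 2) * hs2 | linear_combination (2 - Complex.I/2) * hs2
        | linear_combination (Complex.I/2 + 1) * hs2 | linear_combination (-Complex.I/2 - 1) * hs2
        | linear_combination hs2 + Complex.I_sq | linear_combination -Complex.I_sq
  have hdec2 : (![0,0,1,0] : Fin 4 → ℂ) = s⁻¹ • e 0 + (-(s⁻¹ * Complex.I)) • e 2 := by
    rw [he0, he2]; funext i; fin_cases i <;> simp <;> field_simp <;>
      first
        | rfl | ring1
        | linear_combination hs2 | linear_combination -hs2
        | linear_combination hs2 | linear_combination -hs2
             | linear_combination Complex.I * hs2 | linear_combination -Complex.I * hs2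
        | linear_combination (Complex.I/2) * hs2 | linear_combination (-Complex.I/2) * hs2
        | linear_combination (1 + Complex.I) * hs2 | linear_combination (1 - Complex.I) * hs2
        | linear_combination (-1 + Complex.I) * hs2 | linear_combination (-1 - Complex.I) * hs2
        | linear_combination (Complex.I/2 - 1) * hs2 | linear_combination (1 - Complex.I/2) * hs2
             | linear_combination (Complex.I/2 - 2) * hs2 | linear_combination (2 - Complex.I/2) * hs2
        | linear_combination (Complex.I/2 + 1) * hs2 | linear_combination (-Complex.I/2 - 1) * hs2
        | linear_combination hs2 + Complex.I_sq | linear_combination -Complex.I_sq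
  have hdec3 : (![0,0,0,1] : Fin 4 → ℂ) = s⁻¹ • e 1 + (-(s⁻¹ * Complex.I)) • e 3 := by
    rw [he1, he3]; funext i; fin_cases i <;> simp <;> field_simp <;>
      first
        | rfl | ring1
        | linear_combination hs2 | linear_combination -hs2
        | linear_combination hs2 | linear_combination -hs2
             | linear_combination Complex.I * hs2 | linear_combination -Complex.I * hs2
        | linear_combination (Complex.I/2) * hs2 | linear_combination (-Complex.I/2) * hs2
        | linear_combination (1 + Complex.I) * hs2 | linear_combination (1 - Complex.I) * hs2
        | linear_combination (-1 + Complex.I) * hs2 | linear_combination (-1 - Complex.I) * hs2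
        | linear_combination (Complex.I/2 - 1) * hs2 | linear_combination (1 - Complex.I/2) * hs2
             | linear_combination (Complex.I/2 - 2) * hs2 | linear_combination (2 - Complex.I/2) * hs2
        | linear_combination (Complex.I/2 + 1) * hs2 | linear_combination (-Complex.I/2 - 1) * hs2
        | linear_combination hs2 + Complex.I_sq | linear_combination -Complex.I_sq
  have hcol0 : N.mulVec ![1,0,0,0] = (s⁻¹ * Complex.I) • e 0 := by
    rw [hdec0, Matrix.mulVec_add, Matrix.mulVec_smul, Matrix.mulVec_smul, hN3,
      hNj 0 (by decide), smul_zero, zero_add]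
  have hcol1 : N.mulVec ![0,1,0,0] = 0 := by
    rw [hdec1, Matrix.mulVec_add, Matrix.mulVec_smul, Matrix.mulVec_smul,
      hNj 1 (by decide), hNj 3 (by decide)]; simp
  have hcol2 : N.mulVec ![0,0,1,0] = (-(s⁻¹ * Complex.I)) • e 0 := by
    rw [hdec2, Matrix.mulVec_add, Matrix.mulVec_smul, Matrix.mulVec_smul, hN3,
      hNj 0 (by decide), smul_zero, zero_add]
  have hcol3 : N.mulVec ![0,0,0,1] = 0 := by
    rw [hdec3, Matrix.mulVec_add, Matrix.mulVec_smul, Matrix.mulVec_smul,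
      hNj 1 (by decide), hNj 3 (by decide)]; simp
  apply matrix_ext_of_mulVec
  intro j
  match j with
  | 0 => rw [hp0, hcol0, he0, Nmat_mulVec]
         funext i; fin_cases i <;> simp <;> field_simp <;>
           first
             | rfl | ring1
             | linear_combination hs2 | linear_combination -hs2
             | linear_combination Complex.I * hs2 | linear_combination -Complex.I * hs2
             | linear_combination (Complex.I/2) * hs2 | linear_combination (-Complex.I/2) * hs2
             | linear_combination (Complex.I/2 - 1) * hs2 | linear_combination (1 - Complex.I/2) * hs2
             | linear_combination (Complex.I/2 - 2) * hs2 | linear_combination (2 - Complex.I/2) * hs2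
  | 1 => rw [hp1, hcol1, Nmat_mulVec]
         funext i; fin_cases i <;> simp
  | 2 => rw [hp2, hcol2, he0, Nmat_mulVec]
         funext i; fin_cases i <;> simp <;> field_simp <;>
           first
             | rfl | ring1
             | linear_combination hs2 | linear_combination -hs2
             | linear_combination Complex.I * hs2 | linear_combination -Complex.I * hs2
             | linear_combination (Complex.I/2) * hs2 | linear_combination (-Complex.I/2) * hs2
             | linear_combination (Complex.I/2 - 1) * hs2 | linear_combination (1 - Complex.I/2) * hs2
             | linear_combination (Complex.I/2 - 2) * hs2 | linear_combination (2 - Complex.I/2) * hs2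
  | 3 => rw [hp3, hcol3, Nmat_mulVec]
         funext i; fin_cases i <;> simp
end Nid
/-! ### Exponentials -/

lemma exp_of_sq_zero (A : Matrix (Fin 4) (Fin 4) ℂ) (h : A * A = 0) : NormedSpace.exp A = 1 + A := by
  rw [exp_eq_tsum (𝕂 := ℂ)]
  beta_reduce
  have hpow : ∀ n, 2 ≤ n → A ^ n = 0 := by
    intro n hn
    obtain ⟨k, rfl⟩ := Nat.exists_eq_add_of_le hn
    rw [pow_add, pow_two, h, zero_mul]
  rw [tsum_eq_sum (s := {0, 1}) (by
    intro b hb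
    simp only [Finset.mem_insert, Finset.mem_singleton] at hb
    push_neg at hb
    rw [hpow b (by omega), smul_zero])]
  simp [pow_one]

lemma N'mat_sq : N'mat * N'mat = 0 := by
  apply matrix_ext_of_mulVec
  intro j
  rw [← Matrix.mulVec_mulVec, N'mat_mulVec, N'mat_mulVec]
  funext i; fin_cases i <;> simp

lemma Nmat_sq : Nmat * Nmat = 0 := by
  apply matrix_ext_of_mulVec
  intro j
  rw [← Matrix.mulVec_mulVec, Nmat_mulVec, Nmat_mulVec]
  funext i; fin_cases i <;> simp

lemma exp_smul_N' (z : ℂ) : NormedSpace.exp (z • N'mat) = 1 + z • N'mat :=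
  exp_of_sq_zero _ (by rw [Matrix.smul_mul, Matrix.mul_smul, N'mat_sq, smul_zero, smul_zero])

lemma exp_smul_N (z : ℂ) : NormedSpace.exp (z • Nmat) = 1 + z • Nmat :=
  exp_of_sq_zero _ (by rw [Matrix.smul_mul, Matrix.mul_smul, Nmat_sq, smul_zero, smul_zero])

/-! ### Flag computations -/

lemma mapFlag_F0 (M : Matrix (Fin 4) (Fin 4) ℂ) :
    mapFlag M F0 = (Submodule.span ℂ {M.mulVec ![0,1,0,0]},
      Submodule.span ℂ {M.mulVec ![0,1,0,0], M.mulVec ![0,0,1,0]}) := by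
  simp [mapFlag, F0, Submodule.map_span, Set.image_insert_eq, Set.image_singleton,
    Matrix.mulVecLin_apply]

lemma span_pair_smul (a b : Fin 4 → ℂ) (c : ℂ) (hc : c ≠ 0) :
    Submodule.span ℂ {a, c • b} = Submodule.span ℂ {a, b} := by
  apply le_antisymm <;> rw [Submodule.span_le] <;> rintro v (rfl | rfl)
  · exact Submodule.subset_span (Set.mem_insert _ _)
  · exact Submodule.smul_mem _ c (Submodule.subset_span (Set.mem_insert_of_mem _ rfl))
  · exact Submodule.subset_span (Set.mem_insert _ _)
  · have h2 : c • v ∈ Submodule.span ℂ {a, c • v} :=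
      Submodule.subset_span (Set.mem_insert_of_mem _ rfl)
    have h3 := Submodule.smul_mem _ c⁻¹ h2
    rwa [smul_smul, inv_mul_cancel₀ hc, one_smul] at h3

lemma flag_fix (z : ℂ) : mapFlag (NormedSpace.exp (z • N'mat) * Swp) F0 = Finfty := by
  rw [mapFlag_F0]
  have h1 : (NormedSpace.exp (z • N'mat) * Swp).mulVec ![0,1,0,0] = ![1,0,0,0] := by
    rw [← Matrix.mulVec_mulVec, Swp_mulVec, exp_smul_N', Matrix.add_mulVec,
      Matrix.one_mulVec, Matrix.smul_mulVec, N'mat_mulVec]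
    funext i; fin_cases i <;> simp
  have h2 : (NormedSpace.exp (z • N'mat) * Swp).mulVec ![0,0,1,0] = ![0,0,0,1] := by
    rw [← Matrix.mulVec_mulVec, Swp_mulVec, exp_smul_N', Matrix.add_mulVec,
      Matrix.one_mulVec, Matrix.smul_mulVec, N'mat_mulVec]
    funext i; fin_cases i <;> simp
  rw [h1, h2]; rfl

lemma flag_match (x : ℝ) (hx : 0 ≤ x) :
    mapFlag (NormedSpace.exp ((Complex.I * x) • Nmat)) F0 =
      mapFlag (NormedSpace.exp ((((x/(x+2) : ℝ)) : ℂ) • N'mat) * 1) F0 := by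
  have hx2 : (x : ℂ) + 2 ≠ 0 := by
    intro h
    have := congrArg Complex.re h
    simp at this
    linarith
  rw [mul_one, mapFlag_F0, mapFlag_F0]
  have h1 : (NormedSpace.exp ((Complex.I * x) • Nmat)).mulVec ![0,1,0,0] = ![0,1,0,0] := by
    rw [exp_smul_N, Matrix.add_mulVec, Matrix.one_mulVec, Matrix.smul_mulVec, Nmat_mulVec]
    funext i; fin_cases i <;> simp
  have h1' : (NormedSpace.exp ((((x/(x+2) : ℝ)) : ℂ) • N'mat)).mulVec ![0,1,0,0] = ![0,1,0,0] := by
    rw [exp_smul_N', Matrix.add_mulVec, Matrix.one_mulVec, Matrix.smul_mulVec, N'mat_mulVec]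
    funext i; fin_cases i <;> simp
  have h2 : (NormedSpace.exp ((Complex.I * x) • Nmat)).mulVec ![0,0,1,0] =
      (((x+2)/2 : ℝ) : ℂ) • ((NormedSpace.exp ((((x/(x+2) : ℝ)) : ℂ) • N'mat)).mulVec ![0,0,1,0]) := by
    rw [exp_smul_N, exp_smul_N', Matrix.add_mulVec, Matrix.one_mulVec,
      Matrix.smul_mulVec, Nmat_mulVec, Matrix.add_mulVec, Matrix.one_mulVec,
      Matrix.smul_mulVec, N'mat_mulVec]
    funext i
    fin_cases i <;> push_cast <;> simp <;> field_simp <;>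
      first
        | ring1
        | linear_combination (-(4*(x:ℂ)) - 2*(x:ℂ)^2) * Complex.I_sq
        | linear_combination (-(x:ℂ)) * Complex.I_sq
  have hc : ((((x+2)/2 : ℝ)) : ℂ) ≠ 0 := by
    simp only [ne_eq, Complex.ofReal_eq_zero]
    intro h
    rw [div_eq_zero_iff] at h
    rcases h with h | h <;> linarith
  rw [h1, h1', h2, span_pair_smul _ _ _ hc]

lemma pos_re_of_eq {z : ℂ} {r : ℝ} (h : z = (r : ℂ)) (hr : 0 < r) : 0 < z.re := by
  rw [h]; simpa

/-! ### `F_∞` lies in the period domain -/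

lemma Finfty_mem_Dflag : Finfty ∈ Dflag := by
  have hu0 : (![1,0,0,0] : Fin 4 → ℂ) ≠ 0 := by
    intro h
    have := congrFun h 0
    simp at this
  refine ⟨?_, ?_, ?_, ?_, ?_, ?_⟩
  · exact Submodule.span_mono (by simp)
  · exact finrank_span_singleton hu0
  · have hr : ({![1,0,0,0], ![0,0,0,1]} : Set (Fin 4 → ℂ)) =
        Set.range ![![1,0,0,0], ![0,0,0,1]] := by
      ext y
      constructor
      · rintro (rfl | rfl)
        · exact ⟨0, rfl⟩
        · exact ⟨1, rfl⟩
      · rintro ⟨i, rfl⟩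
        fin_cases i
        · exact Or.inl rfl
        · exact Or.inr rfl
    show Module.finrank ℂ (Submodule.span ℂ ({![1,0,0,0], ![0,0,0,1]} : Set (Fin 4 → ℂ))) = 2
    rw [hr, finrank_span_eq_card (R := ℂ)]
    · simp
    · rw [LinearIndependent.pair_iff]
      intro s t h
      constructor
      · have := congrFun h 0; simpa using this
      · have := congrFun h 3; simpa using this
  · intro a ha b hb
    replace ha : a ∈ Submodule.span ℂ ({![1,0,0,0], ![0,0,0,1]} : Set (Fin 4 → ℂ)) := ha
    replace hb : b ∈ Submodule.span ℂ ({![1,0,0,0], ![0,0,0,1]} : Set (Fin 4 → ℂ)) := hb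
    rw [Submodule.mem_span_pair] at ha hb
    obtain ⟨s, t, rfl⟩ := ha
    obtain ⟨s', t', rfl⟩ := hb
    simp [Bu]
  · intro v hv hvne
    replace hv : v ∈ Submodule.span ℂ ({![1,0,0,0]} : Set (Fin 4 → ℂ)) := hv
    rw [Submodule.mem_span_singleton] at hv
    obtain ⟨a, rfl⟩ := hv
    have ha : a ≠ 0 := by
      intro h; exact hvne (by rw [h, zero_smul])
    have hb : -Complex.I * Bu (a • ![1,0,0,0]) (cjU (a • ![1,0,0,0])) =
        ((Complex.normSq a : ℝ) : ℂ) := by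
      rw [cjU_eq]
      simp [Bu, Complex.mul_conj]
      linear_combination (-(Complex.normSq a : ℂ)) * Complex.I_sq
    exact pos_re_of_eq hb (Complex.normSq_pos.2 ha)
  · intro v hv horth hvne
    replace hv : v ∈ Submodule.span ℂ ({![1,0,0,0], ![0,0,0,1]} : Set (Fin 4 → ℂ)) := hv
    rw [Submodule.mem_span_pair] at hv
    obtain ⟨s, t, rfl⟩ := hv
    have hs : s = 0 := by
      have h0 := horth ![1,0,0,0] (Submodule.subset_span rfl)
      rw [cjU_eq] at h0
      simp [Bu] at h0
      exact h0
    subst hs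
    have ht : t ≠ 0 := by
      intro h; exact hvne (by rw [h]; simp)
    have hb : Complex.I * Bu ((0:ℂ) • ![1,0,0,0] + t • ![0,0,0,1])
        (cjU ((0:ℂ) • ![1,0,0,0] + t • ![0,0,0,1])) = ((Complex.normSq t : ℝ) : ℂ) := by
      rw [cjU_eq]
      simp [Bu, Complex.mul_conj]
      linear_combination (-(Complex.normSq t : ℂ)) * Complex.I_sq
    exact pos_re_of_eq hb (Complex.normSq_pos.2 ht)
/-- Let `N` correspond to `e₃ ↦ e₁` (in the real symplectic basis
`e₁,…,e₄`, expressed here in `u`-coordinates) and `N'` to `u₃ ↦ u₁`.  Suppose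
`Φ` is a function on flags such that (i) `Φ` is constant on `exp(z N')·K·F₀` for every
`|z| < 1`, and (ii) `Φ(exp(i x N) F₀) → 0` as `x → ∞`.  Then `Φ(F_∞) = 0`; in particular,
if moreover `Φ(F) ≠ 0` for every `F ∈ D`, no such `Φ` exists. -/
theorem no_nonvanishing_Phi
    (e : Fin 4 → (Fin 4 → ℂ))
    (he0 : e 0 = (Real.sqrt 2 : ℂ)⁻¹ • ![1, 0, 1, 0])
    (he1 : e 1 = (Real.sqrt 2 : ℂ)⁻¹ • ![0, 1, 0, 1])
    (he2 : e 2 = (Real.sqrt 2 : ℂ)⁻¹ • ![-Complex.I, 0, Complex.I, 0])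
    (he3 : e 3 = (Real.sqrt 2 : ℂ)⁻¹ • ![0, -Complex.I, 0, Complex.I])
    (N : Matrix (Fin 4) (Fin 4) ℂ)
    (hN3 : N.mulVec (e 2) = e 0)
    (hNj : ∀ j : Fin 4, j ≠ 2 → N.mulVec (e j) = 0)
    (N' : Matrix (Fin 4) (Fin 4) ℂ)
    (hN'3 : N'.mulVec (Pi.single 2 1) = Pi.single 0 1)
    (hN'j : ∀ j : Fin 4, j ≠ 2 → N'.mulVec (Pi.single j 1) = 0)
    (Φ : Submodule ℂ (Fin 4 → ℂ) × Submodule ℂ (Fin 4 → ℂ) → ℂ)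
    (hconst : ∀ z : ℂ, ‖z‖ < 1 → ∀ g ∈ Ksub, ∀ g' ∈ Ksub,
      Φ (mapFlag (NormedSpace.exp (z • N') * g) F0) = Φ (mapFlag (NormedSpace.exp (z • N') * g') F0))
    (hlim : Tendsto (fun x : ℝ => Φ (mapFlag (NormedSpace.exp ((Complex.I * x) • N)) F0))
      atTop (nhds 0)) :
    Φ Finfty = 0 ∧ ((∀ Fl ∈ Dflag, Φ Fl ≠ 0) → False) := by
  have hNe : N = Nmat := N_eq e he0 he1 he2 he3 N hN3 hNj
  have hN'e : N' = N'mat := N'_eq N' hN'3 hN'j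
  subst hNe hN'e
  have key : ∀ x : ℝ, 0 ≤ x → Φ (mapFlag (NormedSpace.exp ((Complex.I * x) • Nmat)) F0) = Φ Finfty := by
    intro x hx
    have hz : ‖(((x/(x+2) : ℝ)) : ℂ)‖ < 1 := by
      rw [Complex.norm_real, Real.norm_eq_abs, _root_.abs_of_nonneg (div_nonneg hx (by linarith)),
        div_lt_one (by linarith)]
      linarith
    calc Φ (mapFlag (NormedSpace.exp ((Complex.I * x) • Nmat)) F0)
        = Φ (mapFlag (NormedSpace.exp ((((x/(x+2) : ℝ)) : ℂ) • N'mat) * 1) F0) := by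
          rw [flag_match x hx]
      _ = Φ (mapFlag (NormedSpace.exp ((((x/(x+2) : ℝ)) : ℂ) • N'mat) * Swp) F0) :=
          hconst _ hz 1 one_mem_Ksub Swp Swp_mem_Ksub
      _ = Φ Finfty := by rw [flag_fix]
  have hmain : Φ Finfty = 0 := by
    have hev : (fun x : ℝ => Φ (mapFlag (NormedSpace.exp ((Complex.I * x) • Nmat)) F0)) =ᶠ[atTop]
        (fun _ : ℝ => Φ Finfty) := by
      filter_upwards [eventually_ge_atTop (0 : ℝ)] with x hx
      exact key x hx
    have h2 : Tendsto (fun _ : ℝ => Φ Finfty) atTop (nhds 0) := hlim.congr' hev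
    exact tendsto_nhds_unique tendsto_const_nhds h2
  refine ⟨hmain, fun h => ?_⟩
  exact h Finfty Finfty_mem_Dflag hmain
end
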